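/- Let I ⊆ ℝ be an open interval, f : I → ℝ positive and differentiable, and a > 0, c₂ ≠ 0, H₀ real constants with 4H₀² + a²c₂² = a². Define φ : I × ℝ → ℝ⁴ by φ(u,v) = (u, sin(a v)/(a f(u)), cos(a v)/(a f(u)), 2H₀/(a² c₂ f(u))) and e₄ : I × ℝ → ℝ⁴ by e₄(u,v) = (1/f(u))·(0, −(2H₀/a) sin(a v), −(2H₀/a) cos(a v), c₂). Then, with respect to the Robertson–Walker metric ⟨X,Y⟩ = −X₁Y₁ + f(t)²(X₂Y₂+X₃Y₃+X₄Y₄) at points with first coordinate t = u, one has at every (u,v): ⟨e₄, e₄⟩ = 1, ⟨e₄, ∂φ/∂u⟩ = 0, ⟨e₄, ∂φ/∂v⟩ = 0, and the first component of e₄ is zero (so ⟨e₄, ∂/∂t⟩ = 0 for ∂/∂t = (1,0,0,0)). -/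

import Mathlib

open Real

/-- The Robertson–Walker metric of `L⁴₁(f,0)` at a point with first coordinate `t`:
`⟨X,Y⟩ = -X₁Y₁ + f(t)²(X₂Y₂ + X₃Y₃ + X₄Y₄)`. -/
noncomputable def rwMetric4 (f : ℝ → ℝ) (t : ℝ) (X Y : Fin 4 → ℝ) : ℝ :=
  -(X 0 * Y 0) + f t ^ 2 * (X 1 * Y 1 + X 2 * Y 2 + X 3 * Y 3)

/-- The rotational surface of Theorem 4.1 in `L⁴₁(f,0)`. -/
noncomputable def phiRW4 (f : ℝ → ℝ) (a c₂ H₀ : ℝ) (u v : ℝ) : Fin 4 → ℝ :=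
  ![u,
    Real.sin (a * v) / (a * f u),
    Real.cos (a * v) / (a * f u),
    2 * H₀ / (a ^ 2 * c₂ * f u)]

/-- The unit normal direction `e₄` of the parallel mean curvature vector `H = H₀e₄`. -/
noncomputable def eFour (f : ℝ → ℝ) (a c₂ H₀ : ℝ) (u v : ℝ) : Fin 4 → ℝ :=
  (f u)⁻¹ • ![0, -(2 * H₀ / a) * Real.sin (a * v), -(2 * H₀ / a) * Real.cos (a * v), c₂]

/-- `e₄` is a unit normal vector field of the rotational surface `φ` in `L⁴₁(f,0)`
whose first component vanishes: `⟨e₄,e₄⟩ = 1`, `⟨e₄,φ_u⟩ = 0`, `⟨e₄,φ_v⟩ = 0`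
and `⟨e₄, ∂/∂t⟩ = 0` (the biconservativity condition). -/
theorem eFour_unit_normal (A B : ℝ) (f : ℝ → ℝ) (a c₂ H₀ : ℝ)
    (ha : 0 < a) (hc₂ : c₂ ≠ 0)
    (hrel : 4 * H₀ ^ 2 + a ^ 2 * c₂ ^ 2 = a ^ 2)
    (hfpos : ∀ u ∈ Set.Ioo A B, 0 < f u)
    (hfdiff : ∀ u ∈ Set.Ioo A B, DifferentiableAt ℝ f u) :
    ∀ u ∈ Set.Ioo A B, ∀ v : ℝ,
      rwMetric4 f u (eFour f a c₂ H₀ u v) (eFour f a c₂ H₀ u v) = 1 ∧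
      rwMetric4 f u (eFour f a c₂ H₀ u v)
        (fun i => deriv (fun u' => phiRW4 f a c₂ H₀ u' v i) u) = 0 ∧
      rwMetric4 f u (eFour f a c₂ H₀ u v)
        (fun i => deriv (fun v' => phiRW4 f a c₂ H₀ u v' i) v) = 0 ∧
      eFour f a c₂ H₀ u v 0 = 0 := by

  intro u hu v
  have hfu := hfpos u hu
  have hfne : f u ≠ 0 := ne_of_gt hfu
  have hane : a ≠ 0 := ne_of_gt ha
  have hd := hfdiff u hu
  have hinv : HasDerivAt (fun u' => (f u')⁻¹) (-(deriv f u) / (f u) ^ 2) u :=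
    hd.hasDerivAt.inv hfne
  set L : ℝ := -(deriv f u) / (f u) ^ 2 with hL
  -- u-derivatives of the components
  have h0u : deriv (fun u' => phiRW4 f a c₂ H₀ u' v 0) u = 1 := by
    simp [phiRW4]
  have h1u : deriv (fun u' => phiRW4 f a c₂ H₀ u' v 1) u = Real.sin (a * v) / a * L := by
    have he : (fun u' => phiRW4 f a c₂ H₀ u' v 1)
        = fun u' => Real.sin (a * v) / a * (f u')⁻¹ := by
      funext x; simp only [phiRW4, Matrix.cons_val_one, Matrix.head_cons, Matrix.cons_val_zero]
      rw [div_eq_mul_inv, mul_inv, div_eq_mul_inv]; ring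
    rw [he]; exact (hinv.const_mul _).deriv
  have h2u : deriv (fun u' => phiRW4 f a c₂ H₀ u' v 2) u = Real.cos (a * v) / a * L := by
    have he : (fun u' => phiRW4 f a c₂ H₀ u' v 2)
        = fun u' => Real.cos (a * v) / a * (f u')⁻¹ := by
      funext x; simp only [phiRW4, Matrix.cons_val_two, Matrix.tail_cons, Matrix.head_cons]
      rw [div_eq_mul_inv, mul_inv, div_eq_mul_inv]; ring
    rw [he]; exact (hinv.const_mul _).deriv
  have h3u : deriv (fun u' => phiRW4 f a c₂ H₀ u' v 3) u = 2 * H₀ / (a ^ 2 * c₂) * L := by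
    have he : (fun u' => phiRW4 f a c₂ H₀ u' v 3)
        = fun u' => 2 * H₀ / (a ^ 2 * c₂) * (f u')⁻¹ := by
      funext x; simp only [phiRW4, Matrix.cons_val_three, Matrix.tail_cons, Matrix.head_cons]
      rw [div_eq_mul_inv, mul_inv, div_eq_mul_inv]; ring
    rw [he]; exact (hinv.const_mul _).deriv
  -- v-derivatives of the components
  have h0v : deriv (fun v' => phiRW4 f a c₂ H₀ u v' 0) v = 0 := by
    simp [phiRW4]
  have hsin : HasDerivAt (fun v' => Real.sin (a * v')) (Real.cos (a * v) * a) v := by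
    simpa using (((hasDerivAt_id v).const_mul a).sin)
  have hcos : HasDerivAt (fun v' => Real.cos (a * v')) (-Real.sin (a * v) * a) v := by
    simpa using (((hasDerivAt_id v).const_mul a).cos)
  have h1v : deriv (fun v' => phiRW4 f a c₂ H₀ u v' 1) v
      = Real.cos (a * v) * a / (a * f u) := by
    have he : (fun v' => phiRW4 f a c₂ H₀ u v' 1)
        = fun v' => Real.sin (a * v') / (a * f u) := by
      funext x; simp [phiRW4]
    rw [he]; exact (hsin.div_const _).deriv
  have h2v : deriv (fun v' => phiRW4 f a c₂ H₀ u v' 2) v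
      = -Real.sin (a * v) * a / (a * f u) := by
    have he : (fun v' => phiRW4 f a c₂ H₀ u v' 2)
        = fun v' => Real.cos (a * v') / (a * f u) := by
      funext x; simp [phiRW4, Matrix.cons_val_two, Matrix.tail_cons]
    rw [he]; exact (hcos.div_const _).deriv
  have h3v : deriv (fun v' => phiRW4 f a c₂ H₀ u v' 3) v = 0 := by
    simp [phiRW4, Matrix.cons_val_three, Matrix.tail_cons]
  have hpyth : Real.sin (a * v) ^ 2 + Real.cos (a * v) ^ 2 = 1 := Real.sin_sq_add_cos_sq _
  refine ⟨?_, ?_, ?_, ?_⟩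
  · simp only [rwMetric4, eFour, Pi.smul_apply, smul_eq_mul,
      Matrix.cons_val_zero, Matrix.cons_val_one, Matrix.head_cons,
      Matrix.cons_val_two, Matrix.tail_cons, Matrix.cons_val_three]
    field_simp
    linear_combination (f u ^ 2 * 4 * H₀ ^ 2) * hpyth + f u ^ 2 * hrel
  · simp only [rwMetric4, eFour, Pi.smul_apply, smul_eq_mul,
      Matrix.cons_val_zero, Matrix.cons_val_one, Matrix.head_cons,
      Matrix.cons_val_two, Matrix.tail_cons, Matrix.cons_val_three,
      h0u, h1u, h2u, h3u]
    field_simp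
    ring_nf
    linear_combination (f u ^ 2 * H₀ * deriv f u * ((f u)⁻¹) ^ 2 * 2) * hpyth
  · simp only [rwMetric4, eFour, Pi.smul_apply, smul_eq_mul,
      Matrix.cons_val_zero, Matrix.cons_val_one, Matrix.head_cons,
      Matrix.cons_val_two, Matrix.tail_cons, Matrix.cons_val_three,
      h0v, h1v, h2v, h3v]
    field_simp
    ring
  · simp [eFour]
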